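/- Let G₁ = (V, E) be a finite directed graph with distinguished nodes s, t ∈ V, and let G₂ = (V ∪ {t'}, E ∪ {(t, t')}) be obtained by adding a new node t' and the edge (t, t'). Equip every edge of G₂ with influence probability p = 1/2, and set the boosted influence probability of the edge (t, t') to p'_{tt'} = 1. With seed set S = {s} and boost set B = {t'}, the boost of influence spread satisfies 2·Δ_{{s}}({t'}) = Pr[s is connected to t in the random subgraph of G₁ in which each edge is independently retained with probability 1/2]. (This is the correctness of the reduction establishing the #P-hardness of computing Δ_S(B).) -/

import Mathlib

open Finset
open scoped Classical

noncomputable section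

variable {V : Type*}

/-- The probability weight of the live-edge configuration `L ⊆ E`:
each edge `e ∈ E` is independently live with probability `p e`. -/
def edgeWeight [DecidableEq V] (E : Finset (V × V)) (p : V × V → ℝ)
    (L : Finset (V × V)) : ℝ :=
  (∏ e ∈ L, p e) * ∏ e ∈ E \ L, (1 - p e)

/-- `v` is activated in configuration `L`: it is reachable from some seed in `S`
through live (directed) edges. -/
def Reaches (L : Finset (V × V)) (S : Finset V) (v : V) : Prop :=
  ∃ s ∈ S, Relation.ReflTransGen (fun a b => (a, b) ∈ L) s v

/-- Activation probability of node `v` under the live-edge model with edge set `E`,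
edge probabilities `p`, and seed set `S`. -/
def ap [Fintype V] [DecidableEq V] (E : Finset (V × V)) (p : V × V → ℝ)
    (S : Finset V) (v : V) : ℝ :=
  ∑ L ∈ E.powerset, edgeWeight E p L * (if Reaches L S v then 1 else 0)

/-- Expected number of activated nodes lying in the node set `W`. -/
def spreadOn [Fintype V] [DecidableEq V] (E : Finset (V × V)) (p : V × V → ℝ)
    (S W : Finset V) : ℝ :=
  ∑ L ∈ E.powerset, edgeWeight E p L * ((W.filter (fun v => Reaches L S v)).card : ℝ)

/-- The influence spread `σ_S`: expected total number of activated nodes. -/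
def spread [Fintype V] [DecidableEq V] (E : Finset (V × V)) (p : V × V → ℝ)
    (S : Finset V) : ℝ :=
  spreadOn E p S Finset.univ

/-- Boosted edge probabilities: edges pointing into a boosted node use `p'`. -/
def pB (p p' : V × V → ℝ) (B : Finset V) : V × V → ℝ :=
  fun e => if e.2 ∈ B then p' e else p e

/-- The bidirected edge set of an undirected graph: each undirected edge is
replaced by the two directed edges. -/
def treeEdges [Fintype V] [DecidableEq V] (T : SimpleGraph V) [DecidableRel T.Adj] :
    Finset (V × V) :=
  Finset.univ.filter (fun e => T.Adj e.1 e.2)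

/-- `apSub E p S v u` is `ap_B(v\u)`: the activation probability of `v` in the
subtree `G_{v\u}` obtained by removing the directed edges `(u,v)` and `(v,u)`. -/
def apSub [Fintype V] [DecidableEq V] (E : Finset (V × V)) (p : V × V → ℝ)
    (S : Finset V) (v u : V) : ℝ :=
  ap (E \ {(u, v), (v, u)}) p S v

/-- The set of nodes of the connected component containing `v` w.r.t. edge set `E`. -/
def comp [Fintype V] [DecidableEq V] (E : Finset (V × V)) (v : V) : Finset V :=
  Finset.univ.filter (fun w => Relation.ReflTransGen (fun a b => (a, b) ∈ E) v w)

/-- `gain E p S v u` is `g_B(v\u)`: in the subtree `G_{v\u}`, the expected number of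
activated nodes when the seed set is `(S ∩ V(G_{v\u})) ∪ {v}` minus the expected
number when the seed set is `S ∩ V(G_{v\u})`. -/
def gain [Fintype V] [DecidableEq V] (E : Finset (V × V)) (p : V × V → ℝ)
    (S : Finset V) (v u : V) : ℝ :=
  spreadOn (E \ {(u, v), (v, u)}) p (insert v (S ∩ comp (E \ {(u, v), (v, u)}) v))
      (comp (E \ {(u, v), (v, u)}) v)
    - spreadOn (E \ {(u, v), (v, u)}) p (S ∩ comp (E \ {(u, v), (v, u)}) v)
      (comp (E \ {(u, v), (v, u)}) v)

/-- The edge set of `G₂ = (V ∪ {t'}, E ∪ {(t,t')})`, with `t'` represented by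
`none` and every original node `v` by `some v`. -/
def stEdges [DecidableEq V] (E : Finset (V × V)) (t : V) :
    Finset (Option V × Option V) :=
  (E.image fun e => ((some e.1 : Option V), (some e.2 : Option V))) ∪
    {((some t : Option V), (none : Option V))}

/-- Influence probabilities on `G₂`: every edge has probability `1/2`. -/
def stP : Option V × Option V → ℝ := fun _ => 1 / 2

/-- Boosted influence probabilities on `G₂`: the edge `(t, t')` (the only edge
into `t' = none`) has boosted probability `1`. -/
def stP' : Option V × Option V → ℝ :=
  fun e => if e.2 = none then 1 else 1 / 2

namespace SharpPAux

/-- Embedding of edges of `G₁` into edges of `G₂`. -/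
def f : V × V → Option V × Option V := fun e => (some e.1, some e.2)

lemma f_inj : Function.Injective (f (V := V)) := by
  intro a b h
  simp only [f, Prod.mk.injEq, Option.some_inj] at h
  exact Prod.ext h.1 h.2

lemma mem_image_f [DecidableEq V] {L : Finset (V × V)} {x : Option V × Option V}
    (hx : x ∈ L.image f) : ∃ a b, (a, b) ∈ L ∧ x = (some a, some b) := by
  obtain ⟨⟨a, b⟩, hab, rfl⟩ := Finset.mem_image.mp hx
  exact ⟨a, b, hab, rfl⟩

lemma reach_drop [DecidableEq V] {L : Finset (V × V)} {t : V} {a b : Option V}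
    (h : Relation.ReflTransGen
      (fun x y => (x, y) ∈ insert ((some t : Option V), (none : Option V)) (L.image f)) a b) :
    b ≠ none → Relation.ReflTransGen (fun x y => (x, y) ∈ L.image f) a b := by
  induction h with
  | refl => intro _; exact .refl
  | @tail c d h1 h2 ih =>
    intro hd
    rcases Finset.mem_insert.mp h2 with h | h
    · exact absurd (congrArg Prod.snd h) (by simpa using hd)
    · obtain ⟨x, y, _, hx⟩ := mem_image_f h
      have hc : c = some x := (Prod.ext_iff.mp hx).1
      exact (ih (by simp [hc])).tail h

lemma reach_of_image [DecidableEq V] {L : Finset (V × V)} {s : V} {b : Option V}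
    (h : Relation.ReflTransGen (fun x y => (x, y) ∈ L.image f) (some s) b) :
    ∀ v, b = some v → Relation.ReflTransGen (fun a b => (a, b) ∈ L) s v := by
  induction h with
  | refl =>
    intro v hv
    obtain rfl : s = v := by injection hv
    exact .refl
  | @tail c d h1 h2 ih =>
    intro v hv
    obtain ⟨x, y, hxy, hx⟩ := mem_image_f h2
    obtain ⟨hc, hd⟩ := Prod.ext_iff.mp hx
    subst hv
    obtain rfl : y = v := (Option.some.inj hd).symm
    exact (ih x hc).tail hxy

lemma image_of_reach [DecidableEq V] {L : Finset (V × V)} {s v : V}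
    (h : Relation.ReflTransGen (fun a b => (a, b) ∈ L) s v) :
    Relation.ReflTransGen (fun x y => (x, y) ∈ L.image f) (some s) (some v) := by
  induction h with
  | refl => exact .refl
  | @tail x y hx hxy ih => exact ih.tail (Finset.mem_image_of_mem f hxy)

lemma not_reach_none [DecidableEq V] {L : Finset (V × V)} {s : V} :
    ¬ Relation.ReflTransGen (fun x y => (x, y) ∈ L.image f) (some s) none := by
  intro h
  rcases Relation.ReflTransGen.cases_tail h with h | ⟨c, _, h2⟩
  · exact absurd h (by simp)
  · obtain ⟨x, y, _, hx⟩ := mem_image_f h2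
    simpa using (Prod.ext_iff.mp hx).2

lemma reach_none_iff [DecidableEq V] {L : Finset (V × V)} {s t : V} :
    Relation.ReflTransGen
        (fun x y => (x, y) ∈ insert ((some t : Option V), (none : Option V)) (L.image f))
        (some s) none ↔
      Relation.ReflTransGen (fun a b => (a, b) ∈ L) s t := by
  constructor
  · intro h
    rcases Relation.ReflTransGen.cases_tail h with h | ⟨c, h1, h2⟩
    · exact absurd h (by simp)
    · rcases Finset.mem_insert.mp h2 with h2 | h2
      · have hc : c = some t := (Prod.ext_iff.mp h2).1
        subst hc
        exact reach_of_image (reach_drop h1 (by simp)) t rfl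
      · obtain ⟨x, y, _, hx⟩ := mem_image_f h2
        exact absurd (Prod.ext_iff.mp hx).2 (by simp)
  · intro h
    exact (Relation.ReflTransGen.mono (fun a b hab => Finset.mem_insert_of_mem hab) _ _ (image_of_reach h)).tail
      (Finset.mem_insert_self _ _)

lemma reaches_singleton {α : Type*} {L : Finset (α × α)} {s v : α} :
    Reaches L ({s} : Finset α) v ↔ Relation.ReflTransGen (fun a b => (a, b) ∈ L) s v := by
  simp [Reaches]

/-- Counting activated nodes with and without the extra live edge `(t, t')`. -/
lemma count_insert [Fintype V] [DecidableEq V] (L : Finset (V × V)) (s t : V) :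
    ((Finset.univ.filter fun v =>
        Reaches (insert ((some t : Option V), (none : Option V)) (L.image f))
          ({(some s : Option V)} : Finset (Option V)) v).card : ℝ) =
      ((Finset.univ.filter fun v =>
        Reaches (L.image f) ({(some s : Option V)} : Finset (Option V)) v).card : ℝ) +
      (if Relation.ReflTransGen (fun a b => (a, b) ∈ L) s t then 1 else 0) := by
  have hN : (Finset.univ.filter fun v =>
        Reaches (insert ((some t : Option V), (none : Option V)) (L.image f))
          ({(some s : Option V)} : Finset (Option V)) v).card =
      (Finset.univ.filter fun v =>
        Reaches (L.image f) ({(some s : Option V)} : Finset (Option V)) v).card +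
      (if Relation.ReflTransGen (fun a b => (a, b) ∈ L) s t then 1 else 0) := by
    rw [Finset.card_filter, Finset.card_filter, Fintype.sum_option, Fintype.sum_option]
    have hsome : ∀ v : V,
        (Reaches (insert ((some t : Option V), (none : Option V)) (L.image f))
          ({(some s : Option V)} : Finset (Option V)) (some v)) ↔
        Reaches (L.image f) ({(some s : Option V)} : Finset (Option V)) (some v) := by
      intro v
      rw [reaches_singleton, reaches_singleton]
      constructor
      · intro h; exact reach_drop h (by simp)
      · intro h; exact Relation.ReflTransGen.mono (fun a b hab => Finset.mem_insert_of_mem hab) _ _ h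
    have hnone : ¬ Reaches (L.image f) ({(some s : Option V)} : Finset (Option V)) none := by
      rw [reaches_singleton]; exact not_reach_none
    have hnone' : Reaches (insert ((some t : Option V), (none : Option V)) (L.image f))
        ({(some s : Option V)} : Finset (Option V)) none ↔
        Relation.ReflTransGen (fun a b => (a, b) ∈ L) s t := by
      rw [reaches_singleton]; exact reach_none_iff
    simp only [hsome, hnone', if_neg hnone]
    ring
  rw [hN]
  push_cast
  ring

lemma sum_powerset_image [DecidableEq V] (E : Finset (V × V))
    (g : Finset (Option V × Option V) → ℝ) :
    ∑ L' ∈ (E.image f).powerset, g L' = ∑ L ∈ E.powerset, g (L.image f) := by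
  refine (Finset.sum_bij (fun L _ => L.image f) ?_ ?_ ?_ ?_).symm
  · intro L hL
    exact Finset.mem_powerset.mpr (Finset.image_subset_image (Finset.mem_powerset.mp hL))
  · intro L₁ _ L₂ _ h
    exact Finset.image_injective f_inj h
  · intro L' hL'
    obtain ⟨L, hLE, rfl⟩ := Finset.subset_image_iff.mp (Finset.mem_powerset.mp hL')
    exact ⟨L, Finset.mem_powerset.mpr hLE, rfl⟩
  · intro L _; rfl

lemma edgeWeight_const {α : Type*} [DecidableEq α] (E L : Finset (α × α)) (hL : L ⊆ E) :
    edgeWeight E (fun _ => (1 / 2 : ℝ)) L = (1 / 2) ^ E.card := by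
  unfold edgeWeight
  rw [Finset.prod_const, Finset.prod_const]
  have h2 : (1 : ℝ) - 1 / 2 = 1 / 2 := by norm_num
  rw [h2, ← pow_add]
  congr 1
  have := Finset.card_sdiff_add_card_eq_card hL
  omega

lemma snd_ne_none [DecidableEq V] {E : Finset (V × V)} {e : Option V × Option V}
    (he : e ∈ E.image f) : e.2 ≠ none := by
  obtain ⟨a, b, _, rfl⟩ := mem_image_f he
  simp

end SharpPAux

open SharpPAux in
/-- Correctness of the reduction establishing the #P-hardness of computing
`Δ_S(B)`: in `G₂` with seed set `{s}` and boost set `{t'}`,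
`2·Δ_{{s}}({t'})` equals the probability that `s` is connected to `t` in the
random subgraph of `G₁` in which each edge is independently retained with
probability `1/2`. -/
theorem sharpP_reduction_correct [Fintype V] [DecidableEq V]
    (E : Finset (V × V)) (s t : V) :
    2 * (spread (stEdges E t) (pB stP stP' {(none : Option V)})
            ({(some s : Option V)} : Finset (Option V))
          - spread (stEdges E t) (pB stP stP' (∅ : Finset (Option V)))
            ({(some s : Option V)} : Finset (Option V))) =
      ∑ L ∈ E.powerset, (1 / 2 : ℝ) ^ E.card *
        (if Relation.ReflTransGen (fun a b => (a, b) ∈ L) s t then 1 else 0) := by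
  classical
  have hE2 : stEdges E t = insert ((some t : Option V), (none : Option V)) (E.image f) := by
    unfold stEdges
    rw [Finset.union_comm, ← Finset.insert_eq]
    rfl
  have hnot : ((some t : Option V), (none : Option V)) ∉ E.image f := by
    intro h; exact snd_ne_none h rfl
  have hcard : (E.image f).card = E.card := Finset.card_image_of_injective _ f_inj
  have hcard2 :
      (insert ((some t : Option V), (none : Option V)) (E.image f)).card = E.card + 1 := by
    rw [Finset.card_insert_of_notMem hnot, hcard]
  have hp0 : pB stP stP' (∅ : Finset (Option V)) = fun _ => (1 / 2 : ℝ) := by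
    funext e; simp [pB, stP]
  have hp1e : pB stP stP' ({(none : Option V)} : Finset (Option V))
      ((some t : Option V), (none : Option V)) = 1 := by
    simp [pB, stP']
  have hp1m : ∀ e ∈ E.image f,
      pB stP stP' ({(none : Option V)} : Finset (Option V)) e = 1 / 2 := by
    intro e he
    have h2 := snd_ne_none he
    simp [pB, stP, h2]
  -- boosted weight of a configuration that misses the edge (t, t') is zero
  have hw0 : ∀ L ∈ (E.image f).powerset,
      edgeWeight (insert ((some t : Option V), (none : Option V)) (E.image f))
        (pB stP stP' ({(none : Option V)} : Finset (Option V))) L = 0 := by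
    intro L hL
    have hLE := Finset.mem_powerset.mp hL
    have heL : ((some t : Option V), (none : Option V)) ∉ L := by
      intro h; exact hnot (hLE h)
    unfold edgeWeight
    rw [Finset.insert_sdiff_of_notMem _ heL,
      Finset.prod_insert (by simp [Finset.mem_sdiff, hnot]), hp1e]
    norm_num
  -- boosted weight of a configuration that contains the edge (t, t')
  have hw1 : ∀ L ∈ (E.image f).powerset,
      edgeWeight (insert ((some t : Option V), (none : Option V)) (E.image f))
        (pB stP stP' ({(none : Option V)} : Finset (Option V)))
        (insert ((some t : Option V), (none : Option V)) L) = (1 / 2) ^ E.card := by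
    intro L hL
    have hLE := Finset.mem_powerset.mp hL
    have heL : ((some t : Option V), (none : Option V)) ∉ L := by
      intro h; exact hnot (hLE h)
    have hsd : insert ((some t : Option V), (none : Option V)) (E.image f) \
        insert ((some t : Option V), (none : Option V)) L = E.image f \ L := by
      ext x
      simp only [Finset.mem_sdiff, Finset.mem_insert, not_or]
      constructor
      · rintro ⟨rfl | hx, h1, h2⟩
        · exact absurd rfl h1
        · exact ⟨hx, h2⟩
      · rintro ⟨hx, h2⟩
        exact ⟨Or.inr hx, fun h => hnot (h ▸ hx), h2⟩
    unfold edgeWeight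
    rw [hsd, Finset.prod_insert heL, hp1e, one_mul]
    have h1 : ∏ e ∈ L, pB stP stP' ({(none : Option V)} : Finset (Option V)) e
        = (1 / 2 : ℝ) ^ L.card := by
      rw [Finset.prod_congr rfl fun e he => hp1m e (hLE he), Finset.prod_const]
    have h2 : ∏ e ∈ E.image f \ L,
        (1 - pB stP stP' ({(none : Option V)} : Finset (Option V)) e)
        = (1 / 2 : ℝ) ^ (E.image f \ L).card := by
      have := Finset.prod_congr rfl fun e (he : e ∈ E.image f \ L) =>
        show (1 - pB stP stP' ({(none : Option V)} : Finset (Option V)) e) = (1 / 2 : ℝ) by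
          rw [hp1m e (Finset.mem_sdiff.mp he).1]; norm_num
      rw [this, Finset.prod_const]
    rw [h1, h2, ← pow_add, ← hcard]
    congr 1
    have := Finset.card_sdiff_add_card_eq_card hLE
    omega
  -- unboosted weights are all (1/2)^(|E|+1)
  have hw2 : ∀ L ∈ (insert ((some t : Option V), (none : Option V)) (E.image f)).powerset,
      edgeWeight (insert ((some t : Option V), (none : Option V)) (E.image f))
        (pB stP stP' (∅ : Finset (Option V))) L = (1 / 2) ^ (E.card + 1) := by
    intro L hL
    rw [hp0, edgeWeight_const _ _ (Finset.mem_powerset.mp hL), hcard2]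
  simp only [spread, spreadOn, hE2]
  rw [Finset.sum_powerset_insert hnot, Finset.sum_powerset_insert hnot]
  have hS1 : ∑ L ∈ (E.image f).powerset,
      edgeWeight (insert ((some t : Option V), (none : Option V)) (E.image f))
        (pB stP stP' ({(none : Option V)} : Finset (Option V))) L *
        ((Finset.univ.filter fun v =>
          Reaches L ({(some s : Option V)} : Finset (Option V)) v).card : ℝ) = 0 :=
    Finset.sum_eq_zero fun L hL => by rw [hw0 L hL]; ring
  have hS2 : ∑ L ∈ (E.image f).powerset,
      edgeWeight (insert ((some t : Option V), (none : Option V)) (E.image f))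
        (pB stP stP' ({(none : Option V)} : Finset (Option V)))
        (insert ((some t : Option V), (none : Option V)) L) *
        ((Finset.univ.filter fun v =>
          Reaches (insert ((some t : Option V), (none : Option V)) L)
            ({(some s : Option V)} : Finset (Option V)) v).card : ℝ)
      = ∑ L ∈ E.powerset, (1 / 2 : ℝ) ^ E.card *
          (((Finset.univ.filter fun v =>
            Reaches (L.image f) ({(some s : Option V)} : Finset (Option V)) v).card : ℝ) +
            (if Relation.ReflTransGen (fun a b => (a, b) ∈ L) s t then 1 else 0)) := by
    refine (sum_powerset_image E _).trans (Finset.sum_congr rfl fun L hL => ?_)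
    rw [hw1 _ (Finset.mem_powerset.mpr
      (Finset.image_subset_image (Finset.mem_powerset.mp hL))), count_insert]
  have hS3 : ∑ L ∈ (E.image f).powerset,
      edgeWeight (insert ((some t : Option V), (none : Option V)) (E.image f))
        (pB stP stP' (∅ : Finset (Option V))) L *
        ((Finset.univ.filter fun v =>
          Reaches L ({(some s : Option V)} : Finset (Option V)) v).card : ℝ)
      = ∑ L ∈ E.powerset, (1 / 2 : ℝ) ^ (E.card + 1) *
          ((Finset.univ.filter fun v =>
            Reaches (L.image f) ({(some s : Option V)} : Finset (Option V)) v).card : ℝ) := by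
    refine (sum_powerset_image E _).trans (Finset.sum_congr rfl fun L hL => ?_)
    rw [hw2 _ (Finset.mem_powerset.mpr
      ((Finset.image_subset_image (Finset.mem_powerset.mp hL)).trans
        (Finset.subset_insert _ _)))]
  have hS4 : ∑ L ∈ (E.image f).powerset,
      edgeWeight (insert ((some t : Option V), (none : Option V)) (E.image f))
        (pB stP stP' (∅ : Finset (Option V)))
        (insert ((some t : Option V), (none : Option V)) L) *
        ((Finset.univ.filter fun v =>
          Reaches (insert ((some t : Option V), (none : Option V)) L)
            ({(some s : Option V)} : Finset (Option V)) v).card : ℝ)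
      = ∑ L ∈ E.powerset, (1 / 2 : ℝ) ^ (E.card + 1) *
          (((Finset.univ.filter fun v =>
            Reaches (L.image f) ({(some s : Option V)} : Finset (Option V)) v).card : ℝ) +
            (if Relation.ReflTransGen (fun a b => (a, b) ∈ L) s t then 1 else 0)) := by
    refine (sum_powerset_image E _).trans (Finset.sum_congr rfl fun L hL => ?_)
    rw [hw2 _ (Finset.mem_powerset.mpr
      (Finset.insert_subset_insert _
        (Finset.image_subset_image (Finset.mem_powerset.mp hL)))), count_insert]
  rw [hS1, hS2, hS3, hS4, zero_add, ← Finset.sum_add_distrib, ← Finset.sum_sub_distrib,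
    Finset.mul_sum]
  refine Finset.sum_congr rfl fun L hL => ?_
  rw [pow_succ]
  ring

end
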